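/- If r₀ = 0 then r₁ = 0 (i.e., the quantity r₁ vanishes on the zero locus of the polynomial r₀ from equation (1) of the paper). -/
import Mathlib


open Matrix

theorem pretzel_stmt3 (n : ℕ) (hn : 1 ≤ n) (m s : ℂ) (hm : m ≠ 0) (hs : s ≠ 0)
    (hs1 : s + 1 ≠ 0) (hs2 : s ^ (2 * n + 1) + 1 ≠ 0)
    (α β : ℂ)
    (hα : α = (s ^ 2 - 1) * s ^ (2 * n) *
      (-(m ^ 6) * (s - 1) * s ^ 2 * (s ^ (2 * n + 1) + 1)
        + m ^ 4 * (s ^ (2 * n + 2) * (s ^ 4 - 2 * s ^ 2 + 3 * s - 1)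
            + s ^ 4 - 3 * s ^ 3 + 2 * s ^ 2 - 1)
        - m ^ 2 * s * (s ^ (2 * n) * (2 * s ^ 3 - s ^ 2 + 1) - s * (s ^ 3 - s + 2))
        + s ^ 2 * (s ^ (2 * n) - s ^ 2)))
    (hβ : β = m ^ 7 * s ^ (2 * n + 2) * (s ^ 2 - 1) * (s ^ 3 + 1)
        - m ^ 5 * s ^ 3 * (s ^ (4 * n) * (s ^ 3 - s ^ 2 + 1)
            + s ^ (2 * n - 2) * (s - 1) * (s ^ 3 + s + 1) * (s ^ 3 + s ^ 2 + 1)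
            - (s ^ 3 - s + 1))
        + m ^ 3 * s ^ 2 * (s ^ 3 + 1) * (s ^ (2 * n) - 1) * (s ^ (2 * n) + s ^ 2)
        - m * s ^ 3 * (s ^ (2 * n) - s ^ 2) * (s ^ (2 * n) + s))
    (r₀ : ℂ)
    (hr₀ : r₀ = m ^ 8 * (s - 1) * (s + 1) ^ 2 * (s ^ (2 * n) - s ^ 2) * s ^ (2 * n + 2)
      - m ^ 6 * (s ^ (6 * n + 3)
          + (2 * s ^ 6 + s ^ 5 - 4 * s ^ 4 + s ^ 3 + s ^ 2 - s - 1) * s ^ (4 * n + 1)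
          - (s ^ 6 + s ^ 5 - s ^ 4 - s ^ 3 + 4 * s ^ 2 - s - 2) * s ^ (2 * n + 2)
          + s ^ 6)
      + m ^ 4 * ((s ^ 2 + 1) * s ^ (6 * n + 2)
          + (s ^ 6 + 2 * s ^ 5 - 3 * s ^ 4 - 2 * s ^ 3 + 6 * s ^ 2 - 4 * s - 2) * s ^ (4 * n + 3)
          - (2 * s ^ 6 + 4 * s ^ 5 - 6 * s ^ 4 + 2 * s ^ 3 + 3 * s ^ 2 - 2 * s - 1) * s ^ (2 * n)
          + (s ^ 2 + 1) * s ^ 5)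
      - m ^ 2 * (s ^ (6 * n + 3)
          + (2 * s ^ 6 + s ^ 5 - 4 * s ^ 4 + s ^ 3 + s ^ 2 - s - 1) * s ^ (4 * n + 1)
          - (s ^ 6 + s ^ 5 - s ^ 4 - s ^ 3 + 4 * s ^ 2 - s - 2) * s ^ (2 * n + 2)
          + s ^ 6)
      + (s - 1) * (s + 1) ^ 2 * (s ^ (2 * n) - s ^ 2) * s ^ (2 * n + 2))
    (r₁ : ℂ)
    (hr₁ : r₁ = -(α ^ 2) * m * s * (m ^ 2 * s ^ (2 * n + 2) - m ^ 2 - s ^ (2 * n + 1) + s)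
      + α * β * (m ^ 2 - 1) * (m ^ 2 + 1) * s ^ (2 * n + 1) * (s + 1)
      + β ^ 2 * m * s ^ (2 * n) * (m ^ 2 * s ^ (2 * n + 1) - m ^ 2 * s - s ^ (2 * n + 2) + 1))
    (h0 : r₀ = 0) :
    r₁ = 0 := by
  subst hα hβ hr₀ hr₁
  obtain ⟨k, rfl⟩ : ∃ k, n = k + 1 := ⟨n - 1, by omega⟩
  have e1 : 2 * (k + 1) - 2 = 2 * k := by omega
  rw [e1]
  linear_combination (- 1*m^1*s^8*(s^k)^2 + 1*m^1*s^8*(s^k)^4 - 1*m^1*s^11*(s^k)^4 + 1*m^1*s^11*(s^k)^6 + 2*m^3*s^6*(s^k)^2 - 1*m^3*s^7*(s^k)^2 - 1*m^3*s^7*(s^k)^4 + 2*m^3*s^9*(s^k)^2 + 2*m^3*s^9*(s^k)^4 - 2*m^3*s^10*(s^k)^4 - 2*m^3*s^10*(s^k)^6 + 1*m^3*s^12*(s^k)^4 + 1*m^3*s^12*(s^k)^6 - 2*m^3*s^13*(s^k)^6 - 1*m^5*s^4*(s^k)^2 + 1*m^5*s^6*(s^k)^2 + 1*m^5*s^6*(s^k)^4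 - 2*m^5*s^7*(s^k)^2 - 4*m^5*s^7*(s^k)^4 + 6*m^5*s^9*(s^k)^4 + 1*m^5*s^9*(s^k)^6 - 1*m^5*s^10*(s^k)^2 - 6*m^5*s^10*(s^k)^4 + 4*m^5*s^12*(s^k)^4 + 2*m^5*s^12*(s^k)^6 - 1*m^5*s^13*(s^k)^4 - 1*m^5*s^13*(s^k)^6 + 1*m^5*s^15*(s^k)^6 + 1*m^7*s^3*(s^k)^2 - 2*m^7*s^4*(s^k)^2 + 1*m^7*s^5*(s^k)^2 + 2*m^7*s^6*(s^k)^2 + 1*m^7*s^6*(s^k)^4 - 2*m^7*s^7*(s^k)^2 + 1*m^7*s^8*(s^k)^4 + 1*m^7*s^9*(s^k)^2 + 1*m^7*s^9*(s^k)^4 - 1*m^7*s^10*(s^k)^4 - 1*m^7*s^10*(s^k)^6 - 1*m^7*s^11*(s^k)^4 + 2*m^7*s^12*(s^k)^6 - 1*m^7*s^13*(s^k)^4 - 2*m^7*s^13*(s^k)^6 - 1*m^7*s^14*(s^k)^6 + 2*m^7*s^15*(s^k)^6 - 1*m^7*s^16*(s^k)^6 - 1*m^9*s^7*(s^k)^4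 + 1*m^9*s^9*(s^k)^4 - 1*m^9*s^10*(s^k)^4 + 1*m^9*s^12*(s^k)^4) * h0
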